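/- Let M be a sharp saturated commutative monoid, n ∈ M^gp \ M, and suppose ñ ∈ ⟨M, -n⟩^sat is a unit of ⟨M, -n⟩^sat, where ⟨M, -n⟩ is the submonoid of M^gp generated by M and -n. Then there exist positive integers a₁, a₂, non-negative integers b₁, b₂, and elements m₁, m₂ ∈ M with a₁·ñ = m₁ - b₁·n and -a₂·ñ = m₂ - b₂·n in M^gp; moreover any such data forces b₁ = b₂ = 0. -/

import Mathlib

/-- `η : M →+ G` exhibits the abelian group `G` as the groupification of the
commutative monoid `M`. -/
def IsGroupification {M G : Type*} [AddCommMonoid M] [AddCommGroup G] (η : M →+ G) : Prop :=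
  (∀ x : G, ∃ a b : M, x = η a - η b) ∧
  (∀ a b : M, η a = η b ↔ ∃ k : M, a + k = b + k)

/-- A commutative monoid is sharp if its unit group is trivial. -/
def IsSharp (M : Type*) [AddCommMonoid M] : Prop := ∀ x : M, IsAddUnit x → x = 0

/-- A morphism of monoids is local if the preimage of the unit group is the unit group. -/
def IsLocalMonoidHom {N M : Type*} [AddCommMonoid N] [AddCommMonoid M] (f : N →+ M) : Prop :=
  ∀ n : N, IsAddUnit (f n) → IsAddUnit n

/-- `(P, iM, iL)` is the push-out `M ⊔_N L` of `f : N →+ M` and `g : N →+ L` in the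
category of commutative monoids. -/
def IsMonPushout {N M L P : Type*} [AddCommMonoid N] [AddCommMonoid M] [AddCommMonoid L]
    [AddCommMonoid P] (f : N →+ M) (g : N →+ L) (iM : M →+ P) (iL : L →+ P) : Prop :=
  iM.comp f = iL.comp g ∧
  ∀ (Q : Type*) [AddCommMonoid Q] (jM : M →+ Q) (jL : L →+ Q),
    jM.comp f = jL.comp g → ∃! h : P →+ Q, h.comp iM = jM ∧ h.comp iL = jL

/-- The saturation of a subset `P` of an abelian group `G`:
`P^sat = { x ∈ G | ∃ a ≥ 1, a • x ∈ P }`. -/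
def saturationOf {G : Type*} [AddCommGroup G] (P : Set G) : Set G :=
  {x : G | ∃ a : ℕ, 0 < a ∧ a • x ∈ P}

lemma mem_closure_union_neg {G : Type*} [AddCommGroup G] (M : AddSubmonoid G) (n : G)
    {x : G} (hx : x ∈ AddSubmonoid.closure ((M : Set G) ∪ {-n})) :
    ∃ (m : G) (b : ℕ), m ∈ M ∧ x = m - b • n := by
  induction hx using AddSubmonoid.closure_induction with
  | mem y hy =>
    rcases hy with hy | hy
    · exact ⟨y, 0, hy, by simp⟩
    · exact ⟨0, 1, M.zero_mem, by simp at hy ⊢; simp [hy]⟩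
  | zero => exact ⟨0, 0, M.zero_mem, by simp⟩
  | add y z _ _ hy hz =>
    obtain ⟨m, b, hm, rfl⟩ := hy
    obtain ⟨m', b', hm', rfl⟩ := hz
    exact ⟨m + m', b + b', M.add_mem hm hm', by abel_nf; rw [add_smul]; abel⟩

/-- Let `M` be a sharp saturated commutative monoid, realized as a submonoid of its
groupification `G` (so the subgroup generated by `M` is all of `G`), let `n ∈ G \ M`,
and suppose `nt` is a unit of `⟨M, -n⟩^sat` (i.e. both `nt` and `-nt` lie in the saturation
of the submonoid of `G` generated by `M` and `-n`).  Then there exist positive integers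
`a₁, a₂`, non-negative integers `b₁, b₂`, and elements `m₁, m₂ ∈ M` with
`a₁ • nt = m₁ - b₁ • n` and `-(a₂ • nt) = m₂ - b₂ • n`; moreover any such data forces
`b₁ = b₂ = 0`. -/
theorem stmt16 {G : Type*} [AddCommGroup G] (M : AddSubmonoid G)
    (hgen : AddSubgroup.closure (M : Set G) = ⊤)
    (hsharp : ∀ x ∈ M, -x ∈ M → x = 0)
    (hsat : ∀ x : G, (∃ a : ℕ, 0 < a ∧ a • x ∈ M) → x ∈ M)
    (n : G) (hn : n ∉ M)
    (nt : G)
    (hnt : nt ∈ saturationOf (↑(AddSubmonoid.closure ((M : Set G) ∪ {-n})) : Set G))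
    (hnt' : -nt ∈ saturationOf (↑(AddSubmonoid.closure ((M : Set G) ∪ {-n})) : Set G)) :
    (∃ (a₁ a₂ : ℕ), 0 < a₁ ∧ 0 < a₂ ∧ ∃ (b₁ b₂ : ℕ) (m₁ m₂ : G), m₁ ∈ M ∧ m₂ ∈ M ∧
      a₁ • nt = m₁ - b₁ • n ∧ -(a₂ • nt) = m₂ - b₂ • n) ∧
    (∀ (a₁ a₂ : ℕ), 0 < a₁ → 0 < a₂ → ∀ (b₁ b₂ : ℕ) (m₁ m₂ : G), m₁ ∈ M → m₂ ∈ M →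
      a₁ • nt = m₁ - b₁ • n → -(a₂ • nt) = m₂ - b₂ • n → b₁ = 0 ∧ b₂ = 0) := by
  constructor
  · obtain ⟨a₁, ha₁, h₁⟩ := hnt
    obtain ⟨a₂, ha₂, h₂⟩ := hnt'
    obtain ⟨m₁, b₁, hm₁, he₁⟩ := mem_closure_union_neg M n h₁
    obtain ⟨m₂, b₂, hm₂, he₂⟩ := mem_closure_union_neg M n h₂
    exact ⟨a₁, a₂, ha₁, ha₂, b₁, b₂, m₁, m₂, hm₁, hm₂, he₁, by rw [← smul_neg, he₂]⟩
  · intro a₁ a₂ ha₁ ha₂ b₁ b₂ m₁ m₂ hm₁ hm₂ he₁ he₂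
    have key : (a₂ * b₁ + a₁ * b₂) • n = a₂ • m₁ + a₁ • m₂ := by
      have h1 : a₂ • (a₁ • nt) = a₂ • (m₁ - b₁ • n) := by rw [he₁]
      have h2 : a₁ • (-(a₂ • nt)) = a₁ • (m₂ - b₂ • n) := by rw [he₂]
      have h3 : a₂ • (a₁ • nt) + a₁ • (-(a₂ • nt)) = 0 := by
        rw [smul_neg, smul_comm]; abel
      rw [h1, h2] at h3
      rw [smul_sub, smul_sub] at h3
      rw [add_smul, mul_smul, mul_smul, eq_comm, ← sub_eq_zero, ← h3]
      abel
    have hb : a₂ * b₁ + a₁ * b₂ = 0 := by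
      by_contra hne
      have hpos : 0 < a₂ * b₁ + a₁ * b₂ := Nat.pos_of_ne_zero hne
      exact hn (hsat n ⟨_, hpos, key ▸ M.add_mem (M.nsmul_mem hm₁ a₂) (M.nsmul_mem hm₂ a₁)⟩)
    simp only [Nat.add_eq_zero, Nat.mul_eq_zero] at hb
    exact ⟨hb.1.resolve_left ha₂.ne', hb.2.resolve_left ha₁.ne'⟩
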